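/- For every I ∈ B_{k,n}, the number S_I(ξ_n(I_0)) is a strictly positive real number, given explicitly by S_I(ξ_n(I_0)) = ∏_{1≤l<m≤k} sin(π(I_l − I_m)/n) / sin(π(m − l)/n); equivalently, |V(ξ_n(I_0))| · S_I(ξ_n(I_0)) = |V(ξ_n(I))|. (This identifies the Perron–Frobenius eigenvector data of the graph B_{k,n}: h^l(I) = |V(ξ_n(I))|/|V(ξ_n(I_0))| and the invariant probability measure μ^h(I) = |V(ξ_n(I))|²/n^k.) -/

import Mathlib

noncomputable section

open Finset

namespace Paper

def aJ (k : ℕ) (J : Fin k → ℤ) (u : Fin k → ℝ) : ℂ :=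
  Matrix.det (Matrix.of fun l m : Fin k => Complex.exp (Complex.I * (u l : ℂ) * (J m : ℂ)))

def I0 (k : ℕ) : Fin k → ℤ := fun i => (k : ℤ) - 1 - (i : ℤ)

def Vdm (k : ℕ) (u : Fin k → ℝ) : ℂ := aJ k (I0 k) u

def SJ (k : ℕ) (J : Fin k → ℤ) (u : Fin k → ℝ) : ℂ := aJ k J u / Vdm k u

def xi (k n : ℕ) (I : Fin k → ℤ) : Fin k → ℝ :=
  fun j => (2 * Real.pi / (n : ℝ)) * ((I j : ℝ) - ((k : ℝ) - 1) / 2)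

lemma prod_pairs_eq {M : Type*} [CommMonoid M] {k : ℕ} (F : Fin k → Fin k → M) :
    ∏ p ∈ univ.filter (fun p : Fin k × Fin k => p.1 < p.2), F p.1 p.2
      = ∏ i, ∏ j ∈ Finset.Ioi i, F i j := by
  rw [Finset.prod_filter, Fintype.prod_prod_type]
  refine Finset.prod_congr rfl fun i _ => ?_
  rw [Finset.prod_ite, Finset.prod_const_one, mul_one]
  exact Finset.prod_congr (by ext j; simp) (fun _ _ => rfl)

lemma prod_pairs_eq' {M : Type*} [CommMonoid M] {k : ℕ} (F : Fin k → Fin k → M) :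
    ∏ p ∈ univ.filter (fun p : Fin k × Fin k => p.1 < p.2), F p.1 p.2
      = ∏ j, ∏ i ∈ Finset.Iio j, F i j := by
  rw [Finset.prod_filter, Fintype.prod_prod_type, Finset.prod_comm]
  refine Finset.prod_congr rfl fun j _ => ?_
  rw [Finset.prod_ite, Finset.prod_const_one, mul_one]
  exact Finset.prod_congr (by ext i; simp) (fun _ _ => rfl)

lemma prod_pairs_mul {M : Type*} [CommMonoid M] {k : ℕ} (g : Fin k → M) :
    ∏ p ∈ univ.filter (fun p : Fin k × Fin k => p.1 < p.2), (g p.1 * g p.2)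
      = ∏ i, g i ^ (k - 1) := by
  rw [Finset.prod_mul_distrib, prod_pairs_eq (fun i _ => g i), prod_pairs_eq' (fun _ j => g j),
    ← Finset.prod_mul_distrib]
  refine Finset.prod_congr rfl fun i _ => ?_
  rw [Finset.prod_const, Finset.prod_const, Fin.card_Ioi, Fin.card_Iio, ← pow_add]
  congr 1
  omega

lemma exp_diff (A B : ℂ) :
    Complex.exp (-2*B*Complex.I) - Complex.exp (-2*A*Complex.I)
      = Complex.exp (-(A+B)*Complex.I) * ((2*Complex.I) * Complex.sin (A - B)) := by
  have h1 : Complex.exp (-(A+B)*Complex.I) * Complex.exp ((A-B)*Complex.I)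
      = Complex.exp (-2*B*Complex.I) := by rw [← Complex.exp_add]; ring_nf
  have h2 : Complex.exp (-(A+B)*Complex.I) * Complex.exp (-(A-B)*Complex.I)
      = Complex.exp (-2*A*Complex.I) := by rw [← Complex.exp_add]; ring_nf
  rw [Complex.sin]
  linear_combination (-1)*h1 + h2 +
    (Complex.exp (-(A+B)*Complex.I) * Complex.exp ((A-B)*Complex.I)
      - Complex.exp (-(A+B)*Complex.I) * Complex.exp (-(A-B)*Complex.I)) * Complex.I_sq

lemma aJ_eq (k n : ℕ) (hk : 1 ≤ k) (hn : 0 < n) (J : Fin k → ℤ) :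
    aJ k J (xi k n (I0 k)) =
      ∏ p ∈ univ.filter (fun p : Fin k × Fin k => p.1 < p.2),
        ((2*Complex.I) * (Real.sin (Real.pi * ((J p.1 : ℝ) - (J p.2 : ℝ)) / (n:ℝ)) : ℂ)) := by
  have hn' : (n:ℂ) ≠ 0 := by exact_mod_cast hn.ne'
  set c : Fin k → ℂ := fun m => Complex.exp ((Real.pi:ℂ) * Complex.I * ((k:ℂ)-1) * (J m) / n) with hc
  set g : Fin k → ℂ := fun m => Complex.exp (-((Real.pi:ℂ) * Complex.I * (J m) / n)) with hg
  set w : Fin k → ℂ := fun m => Complex.exp (-(2*(Real.pi:ℂ)*Complex.I/n) * (J m)) with hw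
  have entry : ∀ l m : Fin k,
      Complex.exp (Complex.I * ((xi k n (I0 k)) l : ℂ) * (J m : ℂ)) = c m * w m ^ (l:ℕ) := by
    intro l m
    rw [hc, hw]
    simp only
    rw [← Complex.exp_nat_mul, ← Complex.exp_add]
    congr 1
    simp only [xi, I0]
    push_cast
    field_simp
    ring
  have hmat : aJ k J (xi k n (I0 k))
      = (∏ m, c m) * Matrix.det (Matrix.of fun l m : Fin k => w m ^ (l:ℕ)) := by
    rw [aJ, show (Matrix.of fun l m : Fin k =>
        Complex.exp (Complex.I * ((xi k n (I0 k)) l : ℂ) * (J m : ℂ)))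
      = Matrix.of (fun l m : Fin k => c m *
          (Matrix.of fun l m : Fin k => w m ^ (l:ℕ)) l m) from by
        ext l m; simpa using entry l m]
    exact Matrix.det_mul_row c _
  have hvdm : Matrix.det (Matrix.of fun l m : Fin k => w m ^ (l:ℕ))
      = ∏ p ∈ univ.filter (fun p : Fin k × Fin k => p.1 < p.2), (w p.2 - w p.1) := by
    have h1 : (Matrix.of fun l m : Fin k => w m ^ (l:ℕ)) = (Matrix.vandermonde w).transpose := by
      ext l m; simp [Matrix.vandermonde]
    rw [h1, Matrix.det_transpose, Matrix.det_vandermonde, ← prod_pairs_eq (fun i j => w j - w i)]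
  have pairstep : ∀ p : Fin k × Fin k, w p.2 - w p.1
      = (g p.1 * g p.2) * ((2*Complex.I) *
          (Real.sin (Real.pi * ((J p.1 : ℝ) - (J p.2 : ℝ)) / (n:ℝ)) : ℂ)) := by
    intro p
    have h := exp_diff ((Real.pi:ℂ)*(J p.1)/n) ((Real.pi:ℂ)*(J p.2)/n)
    have e2 : w p.2 = Complex.exp (-2*((Real.pi:ℂ)*(J p.2)/n)*Complex.I) := by
      rw [hw]; exact congrArg Complex.exp (by ring)
    have e1 : w p.1 = Complex.exp (-2*((Real.pi:ℂ)*(J p.1)/n)*Complex.I) := by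
      rw [hw]; exact congrArg Complex.exp (by ring)
    have e3 : g p.1 * g p.2 = Complex.exp
        (-((Real.pi:ℂ)*(J p.1)/n + (Real.pi:ℂ)*(J p.2)/n)*Complex.I) := by
      rw [hg]; simp only; rw [← Complex.exp_add]; exact congrArg Complex.exp (by ring)
    have e4 : Complex.sin ((Real.pi:ℂ)*(J p.1)/n - (Real.pi:ℂ)*(J p.2)/n)
        = (Real.sin (Real.pi * ((J p.1 : ℝ) - (J p.2 : ℝ)) / (n:ℝ)) : ℂ) := by
      rw [Complex.ofReal_sin]
      exact congrArg Complex.sin (by push_cast; ring)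
    rw [e1, e2, e3, ← e4, h]
  calc aJ k J (xi k n (I0 k))
      = (∏ m, c m) * ∏ p ∈ univ.filter (fun p : Fin k × Fin k => p.1 < p.2), (w p.2 - w p.1) := by
        rw [hmat, hvdm]
    _ = (∏ m, c m) * ((∏ m, g m ^ (k-1)) *
          ∏ p ∈ univ.filter (fun p : Fin k × Fin k => p.1 < p.2),
            ((2*Complex.I) * (Real.sin (Real.pi * ((J p.1 : ℝ) - (J p.2 : ℝ)) / (n:ℝ)) : ℂ))) := by
        rw [Finset.prod_congr rfl (fun p _ => pairstep p), Finset.prod_mul_distrib,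
          prod_pairs_mul g]
    _ = (∏ m, c m * g m ^ (k-1)) *
          ∏ p ∈ univ.filter (fun p : Fin k × Fin k => p.1 < p.2),
            ((2*Complex.I) * (Real.sin (Real.pi * ((J p.1 : ℝ) - (J p.2 : ℝ)) / (n:ℝ)) : ℂ)) := by
        simp only [Finset.prod_mul_distrib]; ring
    _ = _ := by
        have hone : ∀ m : Fin k, c m * g m ^ (k-1) = 1 := by
          intro m
          have hkc : ((k-1:ℕ):ℂ) = (k:ℂ)-1 := by
            push_cast [Nat.cast_sub hk]; ring
          rw [hc, hg]; simp only
          rw [← Complex.exp_nat_mul, ← Complex.exp_add, show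
            (Real.pi:ℂ) * Complex.I * ((k:ℂ)-1) * (J m) / n
              + (k-1:ℕ) * -((Real.pi:ℂ) * Complex.I * (J m) / n) = 0 from by
            rw [hkc]; ring, Complex.exp_zero]
        rw [Finset.prod_congr rfl (fun m _ => hone m), Finset.prod_const_one, one_mul]

lemma abs_Vdm_eq (k n : ℕ) (hn : 0 < n) (J : Fin k → ℤ) :
    ‖Vdm k (xi k n J)‖ =
      ∏ p ∈ univ.filter (fun p : Fin k × Fin k => p.1 < p.2),
        (2 * |Real.sin (Real.pi * ((J p.1:ℝ) - (J p.2:ℝ)) / (n:ℝ))|) := by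
  have hnR : (n:ℝ) ≠ 0 := by exact_mod_cast hn.ne'
  set u : Fin k → ℝ := xi k n J with hu
  set v : Fin k → ℂ := fun l => Complex.exp (Complex.I * (u l : ℂ)) with hv
  have entry : ∀ l m : Fin k, Complex.exp (Complex.I * (u l : ℂ) * ((I0 k m : ℤ) : ℂ))
      = v l ^ ((Fin.rev m : Fin k) : ℕ) := by
    intro l m
    rw [hv]; simp only
    rw [← Complex.exp_nat_mul]
    congr 1
    have h1 : ((I0 k m : ℤ) : ℂ) = (((Fin.rev m : Fin k) : ℕ) : ℂ) := by
      have hm : (m:ℕ) + 1 ≤ k := m.isLt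
      rw [Fin.val_rev]
      push_cast [Nat.cast_sub hm, I0]
      ring
    rw [h1]; ring
  have hdet : Vdm k u = ((Equiv.Perm.sign (Fin.revPerm : Equiv.Perm (Fin k)) : ℤ) : ℂ)
      * Matrix.det (Matrix.vandermonde v) := by
    have h2 : (Matrix.of fun l m : Fin k =>
        Complex.exp (Complex.I * (u l : ℂ) * ((I0 k m : ℤ) : ℂ)))
        = (Matrix.vandermonde v).submatrix id (Fin.revPerm : Equiv.Perm (Fin k)) := by
      ext l m
      simp only [Matrix.of_apply, Matrix.submatrix_apply, Matrix.vandermonde, id]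
      simpa using entry l m
    rw [Vdm, aJ, h2, Matrix.det_permute']
  have habs : ‖Vdm k u‖ = ‖Matrix.det (Matrix.vandermonde v)‖ := by
    rw [hdet, norm_mul]
    rcases Int.units_eq_one_or (Equiv.Perm.sign (Fin.revPerm : Equiv.Perm (Fin k))) with h | h <;>
      simp [h]
  rw [habs, Matrix.det_vandermonde, ← prod_pairs_eq (fun i j => v j - v i), norm_prod]
  refine Finset.prod_congr rfl fun p hp => ?_
  have hA : v p.1 = Complex.exp (-2*((-(u p.1)/2 : ℝ):ℂ)*Complex.I) := by
    rw [hv]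
    refine congrArg Complex.exp ?_
    push_cast; ring
  have hB : v p.2 = Complex.exp (-2*((-(u p.2)/2 : ℝ):ℂ)*Complex.I) := by
    rw [hv]
    refine congrArg Complex.exp ?_
    push_cast; ring
  rw [hA, hB, exp_diff, norm_mul, norm_mul, norm_mul]
  have e1 : ‖Complex.exp (-(((-(u p.1)/2 : ℝ):ℂ) + ((-(u p.2)/2 : ℝ):ℂ))*Complex.I)‖ = 1 := by
    rw [show (-(((-(u p.1)/2 : ℝ):ℂ) + ((-(u p.2)/2 : ℝ):ℂ))*Complex.I)
        = (((u p.1 + u p.2)/2 : ℝ) : ℂ) * Complex.I from by push_cast; ring]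
    exact Complex.norm_exp_ofReal_mul_I _
  have e2 : Complex.sin (((-(u p.1)/2 : ℝ):ℂ) - ((-(u p.2)/2 : ℝ):ℂ))
      = ((Real.sin ((u p.2 - u p.1)/2) : ℝ) : ℂ) := by
    rw [Complex.ofReal_sin]
    refine congrArg Complex.sin ?_
    push_cast; ring
  rw [e1, e2, one_mul, Complex.norm_real, Real.norm_eq_abs]
  have e3 : (u p.2 - u p.1)/2 = -(Real.pi * ((J p.1:ℝ) - (J p.2:ℝ)) / (n:ℝ)) := by
    simp only [hu, xi]
    field_simp
    ring
  rw [e3, Real.sin_neg, abs_neg]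
  simp

lemma sin_pos_aux (n : ℕ) (hn : 0 < n) (a b : ℤ) (hab : b < a) (ha : a < (n:ℤ)) (hb : 0 ≤ b) :
    0 < Real.sin (Real.pi * ((a:ℝ) - (b:ℝ)) / (n:ℝ)) := by
  have hnR : (0:ℝ) < n := by exact_mod_cast hn
  have hd0 : (0:ℝ) < (a:ℝ) - (b:ℝ) := by
    have : (b:ℝ) < (a:ℝ) := by exact_mod_cast hab
    linarith
  have hdn : (a:ℝ) - (b:ℝ) < (n:ℝ) := by
    have h1 : (a:ℝ) < (n:ℝ) := by exact_mod_cast ha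
    have h2 : (0:ℝ) ≤ (b:ℝ) := by exact_mod_cast hb
    linarith
  apply Real.sin_pos_of_pos_of_lt_pi
  · positivity
  · rw [div_lt_iff₀ hnR]
    nlinarith [Real.pi_pos]

/-- `S_I(ξ_n(I_0))` is a strictly positive real number, given by the explicit
product of ratios of sines, and `|V(ξ_n(I_0))| · S_I(ξ_n(I_0)) = |V(ξ_n(I))|`. -/
theorem stmt9 (k n : ℕ) (hk : 1 ≤ k) (hkn : k ≤ n) (I : Fin k → ℤ)
    (hIdec : ∀ i j : Fin k, i < j → I j < I i)
    (hIbd : ∀ i, 0 ≤ I i ∧ I i < (n : ℤ)) :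
    SJ k I (xi k n (I0 k)) =
      ((∏ p ∈ Finset.univ.filter (fun p : Fin k × Fin k => p.1 < p.2),
          Real.sin (Real.pi * ((I p.1 : ℝ) - (I p.2 : ℝ)) / (n : ℝ)) /
            Real.sin (Real.pi * (((p.2 : ℕ) : ℝ) - ((p.1 : ℕ) : ℝ)) / (n : ℝ)) : ℝ) : ℂ) ∧
    (0 < (∏ p ∈ Finset.univ.filter (fun p : Fin k × Fin k => p.1 < p.2),
          Real.sin (Real.pi * ((I p.1 : ℝ) - (I p.2 : ℝ)) / (n : ℝ)) /
            Real.sin (Real.pi * (((p.2 : ℕ) : ℝ) - ((p.1 : ℕ) : ℝ)) / (n : ℝ)))) ∧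
    (((‖Vdm k (xi k n (I0 k))‖ : ℝ) : ℂ) * SJ k I (xi k n (I0 k)) =
      ((‖Vdm k (xi k n I)‖ : ℝ) : ℂ)) := by
  have hn : 0 < n := lt_of_lt_of_le hk hkn
  set s : Finset (Fin k × Fin k) := univ.filter (fun p : Fin k × Fin k => p.1 < p.2) with hs
  -- positivity of the individual sines
  have hsinI : ∀ p ∈ s, 0 < Real.sin (Real.pi * ((I p.1 : ℝ) - (I p.2 : ℝ)) / (n : ℝ)) := by
    intro p hp
    rw [hs, Finset.mem_filter] at hp
    exact sin_pos_aux n hn _ _ (hIdec p.1 p.2 hp.2) (hIbd p.1).2 (hIbd p.2).1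
  have hsin0 : ∀ p ∈ s, 0 < Real.sin (Real.pi * (((p.2:ℕ) : ℝ) - ((p.1:ℕ) : ℝ)) / (n : ℝ)) := by
    intro p hp
    rw [hs, Finset.mem_filter] at hp
    have h := sin_pos_aux n hn ((p.2:ℕ):ℤ) ((p.1:ℕ):ℤ)
      (by exact_mod_cast hp.2) (by exact_mod_cast lt_of_lt_of_le p.2.isLt hkn)
      (by positivity)
    simpa using h
  -- the two real products
  set PI : ℝ := ∏ p ∈ s, Real.sin (Real.pi * ((I p.1 : ℝ) - (I p.2 : ℝ)) / (n : ℝ)) with hPI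
  set P0 : ℝ := ∏ p ∈ s, Real.sin (Real.pi * (((p.2:ℕ) : ℝ) - ((p.1:ℕ) : ℝ)) / (n : ℝ)) with hP0
  have hPIpos : 0 < PI := Finset.prod_pos hsinI
  have hP0pos : 0 < P0 := Finset.prod_pos hsin0
  -- I0 data
  have hI0 : ∀ p : Fin k × Fin k,
      Real.sin (Real.pi * ((I0 k p.1 : ℝ) - (I0 k p.2 : ℝ)) / (n : ℝ))
        = Real.sin (Real.pi * (((p.2:ℕ) : ℝ) - ((p.1:ℕ) : ℝ)) / (n : ℝ)) := by
    intro p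
    congr 1
    simp only [I0]
    push_cast
    ring
  -- aJ values via aJ_eq
  have haJI : aJ k I (xi k n (I0 k)) = (2*Complex.I) ^ s.card * (PI : ℂ) := by
    rw [aJ_eq k n hk hn I, Finset.prod_mul_distrib, Finset.prod_const, hPI]
    push_cast [Complex.ofReal_prod]
    rw [hs]
  have haJ0 : aJ k (I0 k) (xi k n (I0 k)) = (2*Complex.I) ^ s.card * (P0 : ℂ) := by
    rw [aJ_eq k n hk hn (I0 k), Finset.prod_mul_distrib, Finset.prod_const, hP0]
    push_cast [Complex.ofReal_prod]
    rw [hs]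
    refine congrArg _ (Finset.prod_congr rfl fun p _ => ?_)
    exact_mod_cast congrArg (fun x : ℝ => (x : ℂ)) (hI0 p)
  have htwoI : ((2*Complex.I) ^ s.card : ℂ) ≠ 0 :=
    pow_ne_zero _ (mul_ne_zero two_ne_zero Complex.I_ne_zero)
  -- first conjunct
  have hratio : ∏ p ∈ s, (Real.sin (Real.pi * ((I p.1 : ℝ) - (I p.2 : ℝ)) / (n : ℝ)) /
      Real.sin (Real.pi * (((p.2:ℕ) : ℝ) - ((p.1:ℕ) : ℝ)) / (n : ℝ))) = PI / P0 := by
    rw [hPI, hP0, Finset.prod_div_distrib]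
  have hfirst : SJ k I (xi k n (I0 k)) =
      ((∏ p ∈ s, Real.sin (Real.pi * ((I p.1 : ℝ) - (I p.2 : ℝ)) / (n : ℝ)) /
        Real.sin (Real.pi * (((p.2:ℕ) : ℝ) - ((p.1:ℕ) : ℝ)) / (n : ℝ)) : ℝ) : ℂ) := by
    rw [SJ, Vdm, haJI, haJ0, mul_div_mul_left _ _ htwoI, hratio]
    push_cast
    ring
  refine ⟨hfirst, ?_, ?_⟩
  · rw [hratio]
    exact div_pos hPIpos hP0pos
  · -- third conjunct
    have habs0 : ‖Vdm k (xi k n (I0 k))‖ = 2 ^ s.card * P0 := by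
      rw [abs_Vdm_eq k n hn (I0 k), ← hs]
      rw [Finset.prod_mul_distrib, Finset.prod_const, hP0]
      refine congrArg _ (Finset.prod_congr rfl fun p hp => ?_)
      rw [hI0 p, abs_of_pos (hsin0 p hp)]
    have habsI : ‖Vdm k (xi k n I)‖ = 2 ^ s.card * PI := by
      rw [abs_Vdm_eq k n hn I, ← hs]
      rw [Finset.prod_mul_distrib, Finset.prod_const, hPI]
      refine congrArg _ (Finset.prod_congr rfl fun p hp => ?_)
      rw [abs_of_pos (hsinI p hp)]
    rw [habs0, habsI, hfirst, hratio]
    have hP0C : (P0:ℂ) ≠ 0 := by exact_mod_cast hP0pos.ne'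
    push_cast
    field_simp

end Paper
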